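/- arXiv:math/0209215 — 2 statements merged into one kernel-verified Lean document; each statement's English description precedes it below -/
import Mathlib

section
/- Let R be a commutative ring. In the category Ch(R) of unbounded chain complexes of R-modules, the class of morphisms that are simultaneously monomorphisms and quasi-isomorphisms is stable under pushout: if f : A → B is a monomorphism and a quasi-isomorphism and g : A → C is any morphism, then the cobase change C → B ⊔_A C of f along g is again a monomorphism and a quasi-isomorphism. -/
open CategoryTheory Limits

section Aux

variable {𝒜 : Type*} [Category 𝒜] [Abelian 𝒜]

/-- If `S` is a short exact sequence of (down-ℤ) complexes and `S.f` is a quasi-iso,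
then `S.X₃` is acyclic. -/
lemma aux_isZero_homology_X₃
    {S : ShortComplex (HomologicalComplex 𝒜 (ComplexShape.down ℤ))}
    (hS : S.ShortExact) (hq : QuasiIso S.f) (i : ℤ) :
    IsZero (S.X₃.homology i) := by
  have hij : (ComplexShape.down ℤ).Rel i (i - 1) := by simp
  have e₂ := hS.homology_exact₂ i
  have e₃ := hS.homology_exact₃ i (i - 1) hij
  have e₁ := hS.homology_exact₁ i (i - 1) hij
  have hfi : IsIso (HomologicalComplex.homologyMap S.f i) := by
    rw [← quasiIsoAt_iff_isIso_homologyMap]; infer_instance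
  have hfj : IsIso (HomologicalComplex.homologyMap S.f (i - 1)) := by
    rw [← quasiIsoAt_iff_isIso_homologyMap]; infer_instance
  have hg0 : HomologicalComplex.homologyMap S.g i = 0 := by
    have : Epi (HomologicalComplex.homologyMap S.f i) := inferInstance
    exact e₂.epi_f_iff.mp this
  have hδ0 : hS.δ i (i - 1) hij = 0 := by
    have : Mono (HomologicalComplex.homologyMap S.f (i - 1)) := inferInstance
    exact e₁.mono_g_iff.mp this
  exact e₃.isZero_X₂ hg0 hδ0

/-- If `S` is a short exact sequence of (down-ℤ) complexes and `S.X₃` is acyclic,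
then `S.f` is a quasi-iso. -/
lemma aux_quasiIso_of_isZero_homology_X₃
    {S : ShortComplex (HomologicalComplex 𝒜 (ComplexShape.down ℤ))}
    (hS : S.ShortExact) (h₃ : ∀ i, IsZero (S.X₃.homology i)) :
    QuasiIso S.f := by
  rw [quasiIso_iff]
  intro i
  rw [quasiIsoAt_iff_isIso_homologyMap]
  have hij : (ComplexShape.down ℤ).Rel (i + 1) i := by simp
  have e₂ := hS.homology_exact₂ i
  have e₁ := hS.homology_exact₁ (i + 1) i hij
  have hepi : Epi (HomologicalComplex.homologyMap S.f i) :=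
    e₂.epi_f ((h₃ i).eq_of_tgt _ _)
  have hmono : Mono (HomologicalComplex.homologyMap S.f i) :=
    e₁.mono_g ((h₃ (i + 1)).eq_of_src _ _)
  exact isIso_of_mono_of_epi _

/-- The cokernel of the cobase change of `f` is isomorphic to the cokernel of `f`. -/
noncomputable def aux_cokernelIso {𝒞 : Type*} [Category 𝒞] [Abelian 𝒞]
    {A B C : 𝒞} (f : A ⟶ B) (g : A ⟶ C) :
    cokernel (pushout.inr f g) ≅ cokernel f where
  hom := cokernel.desc _ (pushout.desc (cokernel.π f) 0 (by simp)) (by simp [pushout.inr_desc])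
  inv := cokernel.desc _ (pushout.inl f g ≫ cokernel.π _)
    (by rw [pushout.condition_assoc, cokernel.condition, Limits.comp_zero])
  hom_inv_id := by
    apply coequalizer.hom_ext
    simp only [cokernel.π_desc_assoc, Category.comp_id]
    apply pushout.hom_ext <;> simp [pushout.inl_desc_assoc, pushout.inr_desc_assoc]
  inv_hom_id := by
    apply coequalizer.hom_ext
    simp [pushout.inl_desc]

end Aux

/-- In the category `Ch(R)` of unbounded chain complexes of
`R`-modules, morphisms which are simultaneously monomorphisms and
quasi-isomorphisms are stable under pushout: if `f : A ⟶ B` is a mono and a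
quasi-isomorphism, and `g : A ⟶ C` is arbitrary, then the cobase change
`C ⟶ B ⊔_A C` of `f` along `g` is again a mono and a quasi-isomorphism. -/
theorem mono_quasiIso_stable_under_cobaseChange
    (R : Type) [CommRing R]
    {A B C : HomologicalComplex (ModuleCat R) (ComplexShape.down ℤ)}
    (f : A ⟶ B) (g : A ⟶ C) (hmono : Mono f) (hq : QuasiIso f) :
    Mono (pushout.inr f g) ∧ QuasiIso (pushout.inr f g) := by
  have hm : Mono (pushout.inr f g) := Abelian.mono_pushout_of_mono_f f g
  refine ⟨hm, ?_⟩
  -- the short exact sequence `0 → A → B → coker f → 0`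
  let S₁ : ShortComplex (HomologicalComplex (ModuleCat R) (ComplexShape.down ℤ)) :=
    ShortComplex.mk f (cokernel.π f) (cokernel.condition f)
  have hS₁ : S₁.ShortExact :=
    { exact := ShortComplex.exact_of_g_is_cokernel _ (cokernelIsCokernel f) }
  -- the short exact sequence `0 → C → B ⊔_A C → coker (inr) → 0`
  let S₂ : ShortComplex (HomologicalComplex (ModuleCat R) (ComplexShape.down ℤ)) :=
    ShortComplex.mk (pushout.inr f g) (cokernel.π (pushout.inr f g))
      (cokernel.condition _)
  have hS₂ : S₂.ShortExact :=
    { exact := ShortComplex.exact_of_g_is_cokernel _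
        (cokernelIsCokernel (pushout.inr f g)) }
  -- `coker f` is acyclic since `f` is a mono quasi-iso
  have h₁ : ∀ i, IsZero (S₁.X₃.homology i) := aux_isZero_homology_X₃ hS₁ hq
  -- hence `coker (inr)` is acyclic
  have h₂ : ∀ i, IsZero (S₂.X₃.homology i) := fun i => by
    refine (h₁ i).of_iso ?_
    exact (HomologicalComplex.homologyFunctor (ModuleCat R)
      (ComplexShape.down ℤ) i).mapIso (aux_cokernelIso f g)
  exact aux_quasiIso_of_isZero_homology_X₃ hS₂ h₂
end

section
/- Let R be a commutative ring. In the category Ch(R) of unbounded chain complexes of R-modules, the class of morphisms that are simultaneously monomorphisms and quasi-isomorphisms is stable under transfinite composition: for any well-ordered diagram X : J ⥤ Ch(R) that is continuous at limit stages, if every successor map X_j → X_{j+1} is a monomorphism and a quasi-isomorphism, then the transfinite composite X_⊥ → colim_J X is a monomorphism and a quasi-isomorphism. -/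
open CategoryTheory Limits

section

variable {C : Type*} [Category C] {J : Type*} [LinearOrder J]

/-- The restriction of a diagram `X : J ⥤ C` to the stages strictly below `j`. -/
def restrictionLT (X : J ⥤ C) (j : J) : Set.Iio j ⥤ C :=
  (Subtype.mono_coe _).functor ⋙ X

/-- The natural cocone on the restriction of `X` to the stages strictly below
`j`, with apex `X.obj j`. -/
@[simps]
def coconeLT (X : J ⥤ C) (j : J) : Cocone (restrictionLT X j) where
  pt := X.obj j
  ι :=
    { app := fun k => X.map (homOfLE k.2.le)
      naturality := fun k₁ k₂ φ => by
        dsimp [restrictionLT]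
        rw [Category.comp_id]
        exact (X.map_comp _ _).symm }

end

namespace TransfiniteQISAux

variable {R : Type} [CommRing R]

open CategoryTheory.ShortComplex

/-! ### Elementwise lemmas about the homology of short complexes of modules -/

section SC

variable (S : ShortComplex (ModuleCat R))

lemma g_iCycles_apply (z : S.cycles) : S.g (S.iCycles z) = 0 :=
  ConcreteCategory.congr_hom S.iCycles_g z

lemma exists_cycle (y : S.X₂) (hy : S.g y = 0) : ∃ z : S.cycles, S.iCycles z = y :=
  ⟨S.moduleCatCyclesIso.inv (⟨y, hy⟩ : LinearMap.ker S.g.hom),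
    ConcreteCategory.congr_hom S.moduleCatCyclesIso_inv_iCycles (⟨y, hy⟩ : LinearMap.ker S.g.hom)⟩

lemma iCycles_injective : Function.Injective S.iCycles :=
  (ModuleCat.mono_iff_injective _).1 inferInstance

lemma homologyπ_surjective : Function.Surjective S.homologyπ :=
  (ModuleCat.epi_iff_surjective _).1 inferInstance

lemma i_toCycles_apply (a : S.X₁) : S.iCycles (S.toCycles a) = S.f a :=
  ConcreteCategory.congr_hom S.toCycles_i a

lemma π_toCycles_apply (a : S.X₁) : S.homologyπ (S.toCycles a) = 0 :=
  ConcreteCategory.congr_hom S.toCycles_comp_homologyπ a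

lemma π_eq_zero_iff (z : S.cycles) :
    S.homologyπ z = 0 ↔ ∃ a : S.X₁, S.toCycles a = z := by
  constructor
  · intro h
    have h1 : S.moduleCatLeftHomologyData.π (S.moduleCatCyclesIso.hom z) = 0 := by
      have h2 : S.moduleCatLeftHomologyData.π (S.moduleCatCyclesIso.hom z) =
          S.moduleCatHomologyIso.hom (S.homologyπ z) :=
        (ConcreteCategory.congr_hom S.π_moduleCatCyclesIso_hom z).symm
      rw [h2, h, map_zero]
    have h3 : S.moduleCatCyclesIso.hom z ∈ LinearMap.range S.moduleCatToCycles := by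
      exact (Submodule.Quotient.mk_eq_zero _).1 h1
    obtain ⟨a, ha⟩ := h3
    refine ⟨a, ?_⟩
    have hinj : Function.Injective S.moduleCatCyclesIso.hom :=
      (ModuleCat.mono_iff_injective _).1 inferInstance
    apply hinj
    have h4 : S.moduleCatCyclesIso.hom (S.toCycles a) = S.moduleCatToCycles a :=
      ConcreteCategory.congr_hom S.toCycles_moduleCatCyclesIso_hom a
    rw [h4, ha]
  · rintro ⟨a, rfl⟩
    exact π_toCycles_apply S a

end SC

section SCMap

variable {S₁ S₂ : ShortComplex (ModuleCat R)} (φ : S₁ ⟶ S₂)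

lemma i_cyclesMap_apply (z : S₁.cycles) :
    S₂.iCycles (cyclesMap φ z) = φ.τ₂ (S₁.iCycles z) :=
  ConcreteCategory.congr_hom (cyclesMap_i φ) z

lemma homologyMap_π_apply (z : S₁.cycles) :
    homologyMap φ (S₁.homologyπ z) = S₂.homologyπ (cyclesMap φ z) :=
  ConcreteCategory.congr_hom (homologyπ_naturality φ) z

/-- Elementwise criterion for a morphism of short complexes of modules to
induce an isomorphism on homology. -/
lemma isIso_homologyMap_iff :
    IsIso (homologyMap φ) ↔
      ((∀ (y : S₂.X₂), S₂.g y = 0 → ∃ (x : S₁.X₂) (b : S₂.X₁),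
          S₁.g x = 0 ∧ y = φ.τ₂ x + S₂.f b) ∧
        (∀ (x : S₁.X₂), S₁.g x = 0 → (∃ b : S₂.X₁, S₂.f b = φ.τ₂ x) →
          ∃ a : S₁.X₁, S₁.f a = x)) := by
  constructor
  · intro h
    have hinj : Function.Injective (homologyMap φ) :=
      (ModuleCat.mono_iff_injective _).1 inferInstance
    have hsurj : Function.Surjective (homologyMap φ) :=
      (ModuleCat.epi_iff_surjective _).1 inferInstance
    constructor
    · intro y hy
      obtain ⟨z, hz⟩ := exists_cycle S₂ y hy
      obtain ⟨t, ht⟩ := hsurj (S₂.homologyπ z)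
      obtain ⟨w, rfl⟩ := homologyπ_surjective S₁ t
      rw [homologyMap_π_apply] at ht
      have h0 : S₂.homologyπ (z - cyclesMap φ w) = 0 := by
        rw [map_sub, ht, sub_self]
      obtain ⟨b, hb⟩ := (π_eq_zero_iff S₂ _).1 h0
      refine ⟨S₁.iCycles w, b, g_iCycles_apply S₁ w, ?_⟩
      have := congrArg S₂.iCycles hb
      rw [i_toCycles_apply, map_sub, i_cyclesMap_apply, hz] at this
      rw [this]
      abel
    · rintro x hx ⟨b, hb⟩
      obtain ⟨z, hz⟩ := exists_cycle S₁ x hx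
      have h1 : cyclesMap φ z = S₂.toCycles b := by
        apply iCycles_injective S₂
        rw [i_cyclesMap_apply, i_toCycles_apply, hz, hb]
      have h2 : homologyMap φ (S₁.homologyπ z) = 0 := by
        rw [homologyMap_π_apply, h1, π_toCycles_apply]
      have h3 : S₁.homologyπ z = 0 := by
        apply hinj
        rw [h2, map_zero]
      obtain ⟨a, ha⟩ := (π_eq_zero_iff S₁ _).1 h3
      refine ⟨a, ?_⟩
      have := congrArg S₁.iCycles ha
      rwa [i_toCycles_apply, hz] at this
  · rintro ⟨hsurj, hinj⟩
    have hinj' : Function.Injective (homologyMap φ) := by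
      rw [injective_iff_map_eq_zero]
      intro t ht
      obtain ⟨z, rfl⟩ := homologyπ_surjective S₁ t
      rw [homologyMap_π_apply] at ht
      obtain ⟨b, hb⟩ := (π_eq_zero_iff S₂ _).1 ht
      have hb' : S₂.f b = φ.τ₂ (S₁.iCycles z) := by
        have := congrArg S₂.iCycles hb
        rwa [i_toCycles_apply, i_cyclesMap_apply] at this
      obtain ⟨a, ha⟩ := hinj (S₁.iCycles z) (g_iCycles_apply S₁ z) ⟨b, hb'⟩
      refine (π_eq_zero_iff S₁ _).2 ⟨a, ?_⟩
      apply iCycles_injective S₁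
      rw [i_toCycles_apply, ha]
    have hsurj' : Function.Surjective (homologyMap φ) := by
      intro t
      obtain ⟨z, rfl⟩ := homologyπ_surjective S₂ t
      obtain ⟨x, b, hx, hxy⟩ := hsurj (S₂.iCycles z) (g_iCycles_apply S₂ z)
      obtain ⟨w, hw⟩ := exists_cycle S₁ x hx
      refine ⟨S₁.homologyπ w, ?_⟩
      rw [homologyMap_π_apply]
      have h1 : S₂.toCycles b = z - cyclesMap φ w := by
        apply iCycles_injective S₂
        rw [i_toCycles_apply, map_sub, i_cyclesMap_apply, hw, hxy]
        abel
      have h0 : S₂.homologyπ (z - cyclesMap φ w) = 0 :=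
        (π_eq_zero_iff S₂ _).2 ⟨b, h1⟩
      rw [map_sub, sub_eq_zero] at h0
      exact h0.symm
    haveI : Mono (homologyMap φ) := (ModuleCat.mono_iff_injective _).2 hinj'
    haveI : Epi (homologyMap φ) := (ModuleCat.epi_iff_surjective _).2 hsurj'
    exact isIso_of_mono_of_epi _

end SCMap

/-! ### Elementwise criterion for `QuasiIsoAt` for chain complexes of modules -/

section Chain

variable {M N : HomologicalComplex (ModuleCat.{0} R) (ComplexShape.down ℤ)}

/-- Elementwise quasi-isomorphism criterion in degreee `n`. -/
def QC (f : M ⟶ N) (n : ℤ) : Prop :=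
  (∀ y : N.X n, N.d n (n-1) y = 0 →
     ∃ (x : M.X n) (b : N.X (n+1)), M.d n (n-1) x = 0 ∧ y = f.f n x + N.d (n+1) n b) ∧
  (∀ x : M.X n, M.d n (n-1) x = 0 → (∃ b : N.X (n+1), N.d (n+1) n b = f.f n x) →
     ∃ a : M.X (n+1), M.d (n+1) n a = x)

lemma quasiIsoAt_iff_QC (f : M ⟶ N) (n : ℤ) : QuasiIsoAt f n ↔ QC f n := by
  rw [quasiIsoAt_iff' f (n+1) n (n-1) (ChainComplex.prev ℤ n) (ChainComplex.next ℤ n),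
    ShortComplex.quasiIso_iff,
    isIso_homologyMap_iff ((HomologicalComplex.shortComplexFunctor' _ _ (n+1) n (n-1)).map f)]
  exact Iff.rfl

lemma chain_comm {A B : HomologicalComplex (ModuleCat.{0} R) (ComplexShape.down ℤ)}
    (ψ : A ⟶ B) (p q : ℤ) (x : A.X p) :
    B.d p q (ψ.f p x) = ψ.f q (A.d p q x) :=
  ConcreteCategory.congr_hom (ψ.comm p q) x

end Chain

/-! ### Elementwise lemmas about filtered colimits of chain complexes -/

section Colim

variable {K : Type} [LinearOrder K] [Nonempty K]
  (D : K ⥤ HomologicalComplex (ModuleCat.{0} R) (ComplexShape.down ℤ))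

lemma w_apply {i k : K} (h : i ≤ k) (n : ℤ) (x : (D.obj i).X n) :
    (colimit.ι D k).f n ((D.map (homOfLE h)).f n x) = (colimit.ι D i).f n x :=
  ConcreteCategory.congr_hom
    (congrArg (fun ψ => HomologicalComplex.Hom.f ψ n) (colimit.w D (homOfLE h))) x

lemma map_trans {i j k : K} (h1 : i ≤ j) (h2 : j ≤ k) (n : ℤ) (x : (D.obj i).X n) :
    (D.map (homOfLE h2)).f n ((D.map (homOfLE h1)).f n x) =
      (D.map (homOfLE (h1.trans h2))).f n x := by
  have h3 : D.map (homOfLE h1) ≫ D.map (homOfLE h2) = D.map (homOfLE (h1.trans h2)) := by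
    rw [← D.map_comp]
    exact congrArg D.map (Subsingleton.elim _ _)
  exact ConcreteCategory.congr_hom (congrArg (fun ψ => HomologicalComplex.Hom.f ψ n) h3) x

lemma exists_rep (n : ℤ) (u : (colimit D).X n) :
    ∃ (i : K) (x : (D.obj i).X n), (colimit.ι D i).f n x = u := by
  obtain ⟨i, x, hx0⟩ := Concrete.colimit_exists_rep
    (D ⋙ HomologicalComplex.eval _ _ n)
    ((preservesColimitIso (HomologicalComplex.eval (ModuleCat R) _ n) D).hom u)
  have hx : colimit.ι (D ⋙ HomologicalComplex.eval _ _ n) i x =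
      (preservesColimitIso (HomologicalComplex.eval (ModuleCat R) _ n) D).hom u := hx0
  refine ⟨i, x, ?_⟩
  have h : (preservesColimitIso (HomologicalComplex.eval (ModuleCat R) _ n) D).inv
        (colimit.ι (D ⋙ HomologicalComplex.eval _ _ n) i x) = (colimit.ι D i).f n x :=
    ConcreteCategory.congr_hom
      (ι_preservesColimitIso_inv (HomologicalComplex.eval (ModuleCat R) _ n) D i) x
  have h2 : (preservesColimitIso (HomologicalComplex.eval (ModuleCat R) _ n) D).inv
        ((preservesColimitIso (HomologicalComplex.eval (ModuleCat R) _ n) D).hom u) = u :=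
    ConcreteCategory.congr_hom
      (preservesColimitIso (HomologicalComplex.eval (ModuleCat R) _ n) D).hom_inv_id u
  rw [← h, hx, h2]

lemma rep_eq (n : ℤ) {i j : K} (x : (D.obj i).X n) (y : (D.obj j).X n)
    (h : (colimit.ι D i).f n x = (colimit.ι D j).f n y) :
    ∃ (k : K) (hik : i ≤ k) (hjk : j ≤ k),
      (D.map (homOfLE hik)).f n x = (D.map (homOfLE hjk)).f n y := by
  have hi : (preservesColimitIso (HomologicalComplex.eval (ModuleCat R) _ n) D).hom
        ((colimit.ι D i).f n x) = colimit.ι (D ⋙ HomologicalComplex.eval _ _ n) i x :=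
    ConcreteCategory.congr_hom
      (ι_preservesColimitIso_hom (HomologicalComplex.eval (ModuleCat R) _ n) D i) x
  have hj : (preservesColimitIso (HomologicalComplex.eval (ModuleCat R) _ n) D).hom
        ((colimit.ι D j).f n y) = colimit.ι (D ⋙ HomologicalComplex.eval _ _ n) j y :=
    ConcreteCategory.congr_hom
      (ι_preservesColimitIso_hom (HomologicalComplex.eval (ModuleCat R) _ n) D j) y
  have h1 : colimit.ι (D ⋙ HomologicalComplex.eval _ _ n) i x =
      colimit.ι (D ⋙ HomologicalComplex.eval _ _ n) j y := by
    rw [← hi, ← hj, h]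
  obtain ⟨k, fik, fjk, hk0⟩ :=
    Concrete.colimit_exists_of_rep_eq (D ⋙ HomologicalComplex.eval _ _ n) x y h1
  have hk : (D.map fik).f n x = (D.map fjk).f n y := hk0
  refine ⟨k, leOfHom fik, leOfHom fjk, ?_⟩
  have e1 : homOfLE (leOfHom fik) = fik := Subsingleton.elim _ _
  have e2 : homOfLE (leOfHom fjk) = fjk := Subsingleton.elim _ _
  rw [e1, e2]
  exact hk

/-- The key lemma: over a (nonempty) linearly ordered indexing type, if all the
transition maps of a diagram of chain complexes are monomorphisms and
quasi-isomorphisms, then so is any component of the colimit cocone. -/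
lemma key
    (hm : ∀ (i k : K) (h : i ≤ k), Mono (D.map (homOfLE h)))
    (hq : ∀ (i k : K) (h : i ≤ k), QuasiIso (D.map (homOfLE h)))
    (i₀ : K) : Mono (colimit.ι D i₀) ∧ QuasiIso (colimit.ι D i₀) := by
  have hinj : ∀ (i k : K) (h : i ≤ k) (n : ℤ),
      Function.Injective ((D.map (homOfLE h)).f n) := by
    intro i k h n
    haveI := hm i k h
    exact (ModuleCat.mono_iff_injective _).1 inferInstance
  constructor
  · apply HomologicalComplex.mono_of_mono_f
    intro n
    rw [ModuleCat.mono_iff_injective, injective_iff_map_eq_zero]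
    intro x hx
    have h0 : (colimit.ι D i₀).f n x = (colimit.ι D i₀).f n 0 := by rw [hx, map_zero]
    obtain ⟨k, h1, h2, hk⟩ := rep_eq D n x 0 h0
    rw [map_zero] at hk
    exact hinj i₀ k h1 n (by rw [hk, map_zero])
  · rw [_root_.quasiIso_iff]
    intro n
    rw [quasiIsoAt_iff_QC]
    constructor
    · intro u hu
      obtain ⟨i, x, hx⟩ := exists_rep D n u
      set k := max i i₀ with hkdef
      set x' := (D.map (homOfLE (le_max_left i i₀))).f n x with hx'def
      have hux' : (colimit.ι D k).f n x' = u := by rw [hx'def, w_apply, hx]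
      have hdx' : (colimit.ι D k).f (n-1) ((D.obj k).d n (n-1) x') = 0 := by
        rw [← chain_comm (colimit.ι D k) n (n-1) x', hux', hu]
      have h0 : (colimit.ι D k).f (n-1) ((D.obj k).d n (n-1) x') =
          (colimit.ι D k).f (n-1) 0 := by rw [hdx', map_zero]
      obtain ⟨k₂, hkk₂, _, hk₂⟩ := rep_eq D (n-1) _ 0 h0
      rw [map_zero] at hk₂
      set x₂ := (D.map (homOfLE hkk₂)).f n x' with hx₂def
      have hcyc : (D.obj k₂).d n (n-1) x₂ = 0 := by
        rw [hx₂def, chain_comm (D.map (homOfLE hkk₂)) n (n-1) x']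
        exact hk₂
      have hux₂ : (colimit.ι D k₂).f n x₂ = u := by rw [hx₂def, w_apply, hux']
      have hik₂ : i₀ ≤ k₂ := (le_max_right i i₀).trans hkk₂
      haveI := hq i₀ k₂ hik₂
      have hqc := (quasiIsoAt_iff_QC (D.map (homOfLE hik₂)) n).1 inferInstance
      obtain ⟨x₀, b, hx₀, heq⟩ := hqc.1 x₂ hcyc
      refine ⟨x₀, (colimit.ι D k₂).f (n+1) b, hx₀, ?_⟩
      rw [← hux₂, heq, map_add, w_apply]
      congr 1
      exact (chain_comm (colimit.ι D k₂) (n+1) n b).symm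
    · rintro x hx ⟨u, hu⟩
      obtain ⟨jj, v, hv⟩ := exists_rep D (n+1) u
      set k := max jj i₀ with hkdef
      set v' := (D.map (homOfLE (le_max_left jj i₀))).f (n+1) v with hv'def
      have hvk : (colimit.ι D k).f (n+1) v' = u := by rw [hv'def, w_apply, hv]
      have hik : i₀ ≤ k := le_max_right _ _
      have heq : (colimit.ι D k).f n ((D.obj k).d (n+1) n v') =
          (colimit.ι D k).f n ((D.map (homOfLE hik)).f n x) := by
        rw [← chain_comm (colimit.ι D k) (n+1) n v', hvk, hu, w_apply]
      obtain ⟨k₂, h1, h2, hk₂⟩ := rep_eq D n _ _ heq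
      have hik₂ : i₀ ≤ k₂ := hik.trans h1
      haveI := hq i₀ k₂ hik₂
      have hqc := (quasiIsoAt_iff_QC (D.map (homOfLE hik₂)) n).1 inferInstance
      apply hqc.2 x hx
      refine ⟨(D.map (homOfLE h1)).f (n+1) v', ?_⟩
      rw [chain_comm (D.map (homOfLE h1)) (n+1) n v', hk₂]
      have e : homOfLE h2 = homOfLE h1 := rfl
      rw [e, map_trans]

end Colim

end TransfiniteQISAux

namespace TransfiniteQISAux

set_option maxHeartbeats 1000000 in
set_option synthInstance.maxHeartbeats 200000 in
/-- The limit-ordinal step of the transfinite induction. -/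
lemma limitCase {R : Type} [CommRing R] {J : Type} [LinearOrder J]
    (X : J ⥤ HomologicalComplex (ModuleCat.{0} R) (ComplexShape.down ℤ))
    (j i : J) (hij : i < j) (hc : IsColimit (coconeLT X j))
    (hbelow : ∀ (a b : J), b < j → ∀ (hab : a ≤ b),
      Mono (X.map (homOfLE hab)) ∧ QuasiIso (X.map (homOfLE hab))) :
    Mono (X.map (homOfLE hij.le)) ∧ QuasiIso (X.map (homOfLE hij.le)) := by
  haveI hcs1 : HasColimitsOfShape (↥(Set.Iio j)) (ModuleCat R) := inferInstance
  haveI hcs2 : HasColimitsOfShape (↥(Set.Iio j))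
      (HomologicalComplex (ModuleCat.{0} R) (ComplexShape.down ℤ)) := inferInstance
  haveI : Nonempty ↥(Set.Iio j) := ⟨⟨i, hij⟩⟩
  have hD : ∀ (a b : ↥(Set.Iio j)) (hab : a ≤ b),
      (restrictionLT X j).map (homOfLE hab) =
        X.map (homOfLE (Subtype.coe_le_coe.2 hab)) := by
    intro a b hab
    show X.map _ = X.map _
    exact congrArg X.map (Subsingleton.elim _ _)
  have hall : ∀ (a b : ↥(Set.Iio j)) (hab : a ≤ b),
      Mono ((restrictionLT X j).map (homOfLE hab)) ∧
        QuasiIso ((restrictionLT X j).map (homOfLE hab)) := by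
    intro a b hab
    rw [hD a b hab]
    exact hbelow a b b.2 (Subtype.coe_le_coe.2 hab)
  have hkey := TransfiniteQISAux.key (R := R) (K := ↥(Set.Iio j)) (restrictionLT X j)
    (fun a b hab => (hall a b hab).1) (fun a b hab => (hall a b hab).2) ⟨i, hij⟩
  have e2 : colimit.ι (restrictionLT X j) ⟨i, hij⟩ ≫
      ((colimit.isColimit (restrictionLT X j)).coconePointUniqueUpToIso hc).hom =
        (coconeLT X j).ι.app ⟨i, hij⟩ :=
    IsColimit.comp_coconePointUniqueUpToIso_hom (colimit.isColimit (restrictionLT X j)) hc _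
  have e1 : X.map (homOfLE hij.le) = colimit.ι (restrictionLT X j) ⟨i, hij⟩ ≫
      ((colimit.isColimit (restrictionLT X j)).coconePointUniqueUpToIso hc).hom := by
    rw [e2]
    exact congrArg X.map (Subsingleton.elim _ _)
  rw [e1]
  haveI := hkey.1
  haveI := hkey.2
  have hm : Mono ((colimit.isColimit (restrictionLT X j)).coconePointUniqueUpToIso hc).hom :=
    inferInstance
  have hq : QuasiIso ((colimit.isColimit (restrictionLT X j)).coconePointUniqueUpToIso hc).hom :=
    inferInstance
  exact ⟨mono_comp' hkey.1 hm, quasiIso_comp _ _ (hφ := hkey.2) (hφ' := hq)⟩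

end TransfiniteQISAux

/-- In `Ch(R)`, morphisms which are simultaneously
monomorphisms and quasi-isomorphisms are stable under transfinite composition:
for a well-ordered continuous diagram `X : J ⥤ Ch(R)` all of whose successor
maps are monomorphisms and quasi-isomorphisms, the transfinite composite
`X_⊥ ⟶ colim_J X` is a monomorphism and a quasi-isomorphism. -/
theorem mono_quasiIso_stable_under_transfinite_composition
    (R : Type) [CommRing R]
    (J : Type) [LinearOrder J] [OrderBot J] [SuccOrder J] [WellFoundedLT J]
    (X : J ⥤ HomologicalComplex (ModuleCat R) (ComplexShape.down ℤ))
    (hsucc : ∀ j : J, ¬ IsMax j →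
      Mono (X.map (homOfLE (Order.le_succ j))) ∧
        QuasiIso (X.map (homOfLE (Order.le_succ j))))
    (hcont : ∀ j : J, Order.IsSuccLimit j → Nonempty (IsColimit (coconeLT X j))) :
    Mono (colimit.ι X ⊥) ∧ QuasiIso (colimit.ι X ⊥) := by
  have P : ∀ j i (h : i ≤ j), Mono (X.map (homOfLE h)) ∧ QuasiIso (X.map (homOfLE h)) := by
    intro j
    induction j using WellFoundedLT.induction with
    | _ j IH =>
      intro i h
      rcases eq_or_lt_of_le h with rfl | hij
      · rw [show homOfLE h = 𝟙 i from Subsingleton.elim _ _, X.map_id]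
        exact ⟨inferInstance, inferInstance⟩
      · by_cases hlim : Order.IsSuccPrelimit j
        · -- limit case
          have hlim' : Order.IsSuccLimit j := ⟨hij.not_isMin, hlim⟩
          obtain ⟨hc⟩ := hcont j hlim'
          exact TransfiniteQISAux.limitCase X j i hij hc
            (fun a b hb hab => IH b hb a hab)
        · -- successor case
          obtain ⟨b, hcov⟩ := Order.not_isSuccPrelimit_iff.1 hlim
          have hb1 : ¬ IsMax b := hcov.lt.not_isMax
          have hb2 := Order.succ_eq_of_covBy hcov
          subst hb2
          have hib : i ≤ b := (Order.lt_succ_iff_of_not_isMax hb1).1 hij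
          have hbj : b < Order.succ b := Order.lt_succ_of_not_isMax hb1
          obtain ⟨m1, q1⟩ := IH b hbj i hib
          obtain ⟨m2, q2⟩ := hsucc b hb1
          have e : homOfLE h = homOfLE hib ≫ homOfLE (Order.le_succ b) :=
            Subsingleton.elim _ _
          rw [e, X.map_comp]
          haveI := m1; haveI := q1; haveI := m2; haveI := q2
          exact ⟨mono_comp _ _, inferInstance⟩
  haveI : Nonempty J := ⟨⊥⟩
  exact TransfiniteQISAux.key X (fun a b hab => (P b a hab).1)
    (fun a b hab => (P b a hab).2) ⊥
end
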